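/- Let g > 0, h₀ > 0, a > 0, and A ∈ (0,1) be real numbers and set κ = √(8·g·h₀)/a. Define, for (x,y,t) ∈ ℝ³, P(t) = 1 − A·cos(κt), b(x,y) = (h₀/a²)(x² + y²), H(x,y,t) = h₀·(√(1−A²)/P(t) − ((x² + y²)/a²)·(1−A²)/P(t)²), U(x,y,t) = (κ·A·sin(κt)/(2·P(t)))·x, and V(x,y,t) = (κ·A·sin(κt)/(2·P(t)))·y. Then at every point (x,y,t) with H(x,y,t) > 0, the triple (H, U, V) satisfies the two-dimensional shallow water equations: ∂_t H + ∂_x(HU) + ∂_y(HV) = 0, ∂_t(HU) + ∂_x(HU² + (g/2)H²) + ∂_y(HUV) = −g·H·∂_x b, and ∂_t(HV) + ∂_x(HUV) + ∂_y(HV² + (g/2)H²) = −g·H·∂_y b. -/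

import Mathlib

set_option maxHeartbeats 8000000 in
/-- The Thacker-type analytic solution of long wave resonance in a parabolic
basin satisfies the two-dimensional shallow water equations at every point
where the water height is positive. -/
theorem parabolic_basin_exact_solution
    (g h0 a A : ℝ) (hg : 0 < g) (hh0 : 0 < h0) (ha : 0 < a)
    (hA : A ∈ Set.Ioo (0 : ℝ) 1)
    (κ : ℝ) (hκ : κ = Real.sqrt (8 * g * h0) / a)
    (P : ℝ → ℝ) (hP : ∀ t, P t = 1 - A * Real.cos (κ * t))
    (b : ℝ → ℝ → ℝ) (hb : ∀ x y, b x y = h0 / a ^ 2 * (x ^ 2 + y ^ 2))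
    (H U V : ℝ → ℝ → ℝ → ℝ)
    (hH : ∀ x y t, H x y t
      = h0 * (Real.sqrt (1 - A ^ 2) / P t
          - (x ^ 2 + y ^ 2) / a ^ 2 * (1 - A ^ 2) / (P t) ^ 2))
    (hU : ∀ x y t, U x y t = κ * A * Real.sin (κ * t) / (2 * P t) * x)
    (hV : ∀ x y t, V x y t = κ * A * Real.sin (κ * t) / (2 * P t) * y) :
    ∀ x y t : ℝ, 0 < H x y t →
      (deriv (fun s => H x y s) t
          + deriv (fun s => H s y t * U s y t) x
          + deriv (fun s => H x s t * V x s t) y = 0) ∧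
      (deriv (fun s => H x y s * U x y s) t
          + deriv (fun s => H s y t * (U s y t) ^ 2 + g / 2 * (H s y t) ^ 2) x
          + deriv (fun s => H x s t * U x s t * V x s t) y
        = -(g * H x y t * deriv (fun s => b s y) x)) ∧
      (deriv (fun s => H x y s * V x y s) t
          + deriv (fun s => H s y t * U s y t * V s y t) x
          + deriv (fun s => H x s t * (V x s t) ^ 2 + g / 2 * (H x s t) ^ 2) y
        = -(g * H x y t * deriv (fun s => b x s) y)) := by
  obtain ⟨hA0, hA1⟩ := hA
  obtain rfl : P = fun t => 1 - A * Real.cos (κ * t) := funext hP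
  obtain rfl : b = fun x y => h0 / a ^ 2 * (x ^ 2 + y ^ 2) := funext fun x => funext (hb x)
  obtain rfl : H = fun x y t => h0 * (Real.sqrt (1 - A ^ 2) / (1 - A * Real.cos (κ * t))
      - (x ^ 2 + y ^ 2) / a ^ 2 * (1 - A ^ 2) / (1 - A * Real.cos (κ * t)) ^ 2) :=
    funext fun x => funext fun y => funext fun t => hH x y t
  obtain rfl : U = fun x y t => κ * A * Real.sin (κ * t) / (2 * (1 - A * Real.cos (κ * t))) * x :=
    funext fun x => funext fun y => funext fun t => hU x y t
  obtain rfl : V = fun x y t => κ * A * Real.sin (κ * t) / (2 * (1 - A * Real.cos (κ * t))) * y :=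
    funext fun x => funext fun y => funext fun t => hV x y t
  intro x y t _
  simp only
  have ha0 : a ≠ 0 := ne_of_gt ha
  have hκ2 : κ ^ 2 = 8 * g * h0 / a ^ 2 := by
    rw [hκ, div_pow, Real.sq_sqrt (by positivity)]
  -- derivative facts (before abbreviating)
  have dP : HasDerivAt (fun u : ℝ => 1 - A * Real.cos (κ * u)) (A * κ * Real.sin (κ * t)) t := by
    have h1 : HasDerivAt (fun u : ℝ => Real.cos (κ * u)) (-Real.sin (κ * t) * (κ * 1)) t :=
      (Real.hasDerivAt_cos (κ * t)).comp t ((hasDerivAt_id t).const_mul κ)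
    have h2 := (h1.const_mul A).const_sub 1
    exact h2.congr_deriv (by ring)
  have dS : HasDerivAt (fun u : ℝ => Real.sin (κ * u)) (κ * Real.cos (κ * t)) t := by
    have h1 : HasDerivAt (fun u : ℝ => Real.sin (κ * u)) (Real.cos (κ * t) * (κ * 1)) t :=
      (Real.hasDerivAt_sin (κ * t)).comp t ((hasDerivAt_id t).const_mul κ)
    convert h1 using 1; ring
  -- abbreviations
  set sn := Real.sin (κ * t) with hsn
  set cn := Real.cos (κ * t) with hcn
  have hs2 : sn ^ 2 = 1 - cn ^ 2 := Real.sin_sq (κ * t)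
  set p := 1 - A * cn with hpdef
  set S := Real.sqrt (1 - A ^ 2) with hSdef
  have hp0 : 0 < p := by
    rw [hpdef, hcn]
    nlinarith [Real.cos_le_one (κ * t), Real.neg_one_le_cos (κ * t)]
  have hp : p ≠ 0 := ne_of_gt hp0
  have hp2 : p ^ 2 ≠ 0 := pow_ne_zero _ hp
  have h2p : (2 * p : ℝ) ≠ 0 := by positivity
  clear_value sn cn p S
  have hA0' : A ≠ 0 := ne_of_gt hA0
  have hcne : cn = (1 - p) / A := by rw [hpdef]; field_simp; ring
  have hpe : p = 1 - A * Real.cos (κ * t) := by rw [hpdef, hcn]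
  have hp' : (1 - A * Real.cos (κ * t)) ≠ 0 := hpe ▸ hp
  have hp2' : ((1 - A * Real.cos (κ * t)) : ℝ) ^ 2 ≠ 0 := pow_ne_zero _ hp'
  have h2p' : (2 * (1 - A * Real.cos (κ * t)) : ℝ) ≠ 0 := by
    rw [← hpe]; exact h2p
  -- HasDerivAt for all the needed quantities
  have dHt : HasDerivAt (fun u : ℝ => h0 * (S / (1 - A * Real.cos (κ * u))
      - (x ^ 2 + y ^ 2) / a ^ 2 * (1 - A ^ 2) / (1 - A * Real.cos (κ * u)) ^ 2))
      (h0 * ((0 * (1 - A * Real.cos (κ * t)) - S * (A * κ * sn)) / (1 - A * Real.cos (κ * t)) ^ 2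
        - (0 * ((1 - A * Real.cos (κ * t)) ^ 2) - (x ^ 2 + y ^ 2) / a ^ 2 * (1 - A ^ 2) *
            (2 * (1 - A * Real.cos (κ * t)) ^ 1 * (A * κ * sn)))
          / ((1 - A * Real.cos (κ * t)) ^ 2) ^ 2)) t :=
    (((hasDerivAt_const t S).div dP hp').sub
      ((hasDerivAt_const t ((x ^ 2 + y ^ 2) / a ^ 2 * (1 - A ^ 2))).div (dP.pow 2) hp2')).const_mul h0
  rw [← hpe] at dHt
  have dUVt : HasDerivAt (fun u : ℝ => κ * A * Real.sin (κ * u) / (2 * (1 - A * Real.cos (κ * u))))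
      ((κ * A * (κ * cn) * (2 * (1 - A * Real.cos (κ * t))) - κ * A * Real.sin (κ * t) * (2 * (A * κ * sn)))
        / (2 * (1 - A * Real.cos (κ * t))) ^ 2) t :=
    (dS.const_mul (κ * A)).div (dP.const_mul 2) h2p'
  rw [← hpe, ← hsn] at dUVt
  have dHx : HasDerivAt (fun u : ℝ => h0 * (S / p - (u ^ 2 + y ^ 2) / a ^ 2 * (1 - A ^ 2) / p ^ 2))
      (h0 * (0 - 2 * x ^ 1 / a ^ 2 * (1 - A ^ 2) / p ^ 2)) x :=
    ((hasDerivAt_const x (S / p)).sub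
      (((((hasDerivAt_pow 2 x).add_const (y ^ 2)).div_const (a ^ 2)).mul_const
        (1 - A ^ 2)).div_const (p ^ 2))).const_mul h0
  have dHy : HasDerivAt (fun u : ℝ => h0 * (S / p - (x ^ 2 + u ^ 2) / a ^ 2 * (1 - A ^ 2) / p ^ 2))
      (h0 * (0 - 2 * y ^ 1 / a ^ 2 * (1 - A ^ 2) / p ^ 2)) y :=
    ((hasDerivAt_const y (S / p)).sub
      (((((hasDerivAt_pow 2 y).const_add (x ^ 2)).div_const (a ^ 2)).mul_const
        (1 - A ^ 2)).div_const (p ^ 2))).const_mul h0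
  have dUx : HasDerivAt (fun u : ℝ => κ * A * sn / (2 * p) * u) (κ * A * sn / (2 * p) * 1) x :=
    (hasDerivAt_id x).const_mul _
  have dVy : HasDerivAt (fun u : ℝ => κ * A * sn / (2 * p) * u) (κ * A * sn / (2 * p) * 1) y :=
    (hasDerivAt_id y).const_mul _
  have dbx : HasDerivAt (fun u : ℝ => h0 / a ^ 2 * (u ^ 2 + y ^ 2)) (h0 / a ^ 2 * (2 * x ^ 1)) x :=
    ((hasDerivAt_pow 2 x).add_const (y ^ 2)).const_mul _
  have dby : HasDerivAt (fun u : ℝ => h0 / a ^ 2 * (x ^ 2 + u ^ 2)) (h0 / a ^ 2 * (2 * y ^ 1)) y :=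
    ((hasDerivAt_pow 2 y).const_add (x ^ 2)).const_mul _
  refine ⟨?_, ?_, ?_⟩
  · rw [dHt.deriv, (dHx.fun_mul dUx).deriv, (dHy.fun_mul dVy).deriv]
    field_simp
    ring
  · rw [(dHt.fun_mul (dUVt.mul_const x)).deriv,
      ((dHx.fun_mul (dUx.fun_pow 2)).fun_add ((dHx.fun_pow 2).const_mul (g / 2))).deriv,
      ((dHy.mul_const (κ * A * sn / (2 * p) * x)).fun_mul dVy).deriv,
      dbx.deriv]
    rw [← hpe, ← hsn]
    field_simp
    ring_nf
    rw [hs2, hκ2]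
    field_simp
    rw [hcne]
    field_simp
    ring
  · rw [(dHt.fun_mul (dUVt.mul_const y)).deriv,
      ((dHx.fun_mul dUx).mul_const (κ * A * sn / (2 * p) * y)).deriv,
      ((dHy.fun_mul (dVy.fun_pow 2)).fun_add ((dHy.fun_pow 2).const_mul (g / 2))).deriv,
      dby.deriv]
    rw [← hpe, ← hsn]
    field_simp
    ring_nf
    rw [hs2, hκ2]
    field_simp
    rw [hcne]
    field_simp
    ring
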